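/- Let q, a ∈ ℂ with 0 < |q| < 1, and suppose a ≠ −q^{−k} for all integers k ≥ 0 and a q^k ≠ 1, a² q^{2k} ≠ 1 for all integers k ≥ 1 (so all denominators below are nonzero). Suppose (α_n)_{n≥0}, (β_n)_{n≥0} form a Bailey pair relative to (a, q), i.e. β_n = Σ_{j=0}^{n} α_j / ((q;q)_{n−j} (aq;q)_{n+j}) for all n ≥ 0. Define α'_n = [(1 + a q^{2n}) / ((1 + a) q^n)] α_n and β'_n = [q^{−n} / (−a;q)_{2n}] Σ_{j=0}^{n} [(−1)^{n−j} q^{(n−j)² − (n−j)} / (q²;q²)_{n−j}] β_j. Then (α'_n, β'_n) is a Bailey pair relative to (a², q²), i.e. β'_n = Σ_{j=0}^{n} α'_j / ((q²;q²)_{n−j} (a²q²;q²)_{n+j}) for all n ≥ 0. -/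

import Mathlib

open Finset

/-- The q-Pochhammer symbol `(z;q)_n = ∏_{k=0}^{n-1} (1 - z q^k)`. -/
def qPoch (z q : ℂ) (n : ℕ) : ℂ := ∏ k ∈ Finset.range n, (1 - z * q ^ k)

lemma qPoch_zero (z q : ℂ) : qPoch z q 0 = 1 := by simp [qPoch]

lemma qPoch_succ (z q : ℂ) (n : ℕ) :
    qPoch z q (n + 1) = qPoch z q n * (1 - z * q ^ n) := by
  simp [qPoch, Finset.prod_range_succ]

lemma qPoch_succ_left (z q : ℂ) (n : ℕ) :
    qPoch z q (n + 1) = (1 - z) * qPoch (z * q) q n := by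
  rw [qPoch, Finset.prod_range_succ', qPoch, mul_comm]
  congr 1
  · simp
  · exact Finset.prod_congr rfl fun i _ => by ring

lemma qPoch_add (z q : ℂ) (s t : ℕ) :
    qPoch z q (s + t) = qPoch z q s * qPoch (z * q ^ s) q t := by
  rw [qPoch, Finset.prod_range_add, qPoch, qPoch]
  congr 1
  exact Finset.prod_congr rfl fun i _ => by ring

lemma qPoch_sq (z q : ℂ) (n : ℕ) :
    qPoch (z ^ 2) (q ^ 2) n = qPoch z q n * qPoch (-z) q n := by
  rw [qPoch, qPoch, qPoch, ← Finset.prod_mul_distrib]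
  exact Finset.prod_congr rfl fun i _ => by ring

lemma qPoch_ne_zero {z q : ℂ} {n : ℕ} (h : ∀ k, k < n → (1 : ℂ) - z * q ^ k ≠ 0) :
    qPoch z q n ≠ 0 :=
  Finset.prod_ne_zero_iff.mpr fun i hi => h i (Finset.mem_range.mp hi)

lemma qPoch_shift (z q : ℂ) (t : ℕ) :
    (1 - z) * qPoch (z * q) q t = qPoch z q t * (1 - z * q ^ t) := by
  rw [← qPoch_succ_left, qPoch_succ]

noncomputable def Tt (q b : ℂ) (m k : ℕ) : ℂ :=
  (-1) ^ k * q ^ (k ^ 2 - k) * qPoch (b * q ^ (m - k + 1)) q k /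
    (qPoch (q ^ 2) (q ^ 2) k * qPoch q q (m - k))

noncomputable def Rr (q b : ℂ) (m : ℕ) : ℂ :=
  q ^ m * (1 + b) * qPoch (-(b * q ^ m)) q m /
    ((1 + b * q ^ m) * qPoch (q ^ 2) (q ^ 2) m)

def Nn (q b M x : ℂ) : ℂ :=
  (1 - q) * x ^ 2 + (1 + b) * q ^ 2 * x * M - b * q ^ 3 * M ^ 2 - b ^ 2 * q ^ 4 * M ^ 4

noncomputable def Uu (q b : ℂ) (m : ℕ) : ℕ → ℂ
  | 0 => 0
  | (s + 1) =>
      (-1) ^ (s + 1) * q ^ ((s + 1) ^ 2 - (s + 1)) * (q ^ (2 * s + 2) - 1) *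
          Nn q b (q ^ m) (q ^ (s + 1)) * qPoch (b * q ^ (m + 1 - s)) q s /
        (q ^ (2 * s + 2) * qPoch (q ^ 2) (q ^ 2) (s + 1) * qPoch q q (m - s))

noncomputable def A1c (q b : ℂ) (m : ℕ) : ℂ := (1 + b * q ^ (m + 1)) * (1 - q ^ (2 * m + 2))

noncomputable def A0c (q b : ℂ) (m : ℕ) : ℂ := -q * (1 + b * q ^ (2 * m)) * (1 + b * q ^ (2 * m + 1))

section core

variable {q b : ℂ} (hq : q ≠ 0) (hone : ∀ j : ℕ, 1 ≤ j → (1 : ℂ) - q ^ j ≠ 0)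
  (hb2 : ∀ j : ℕ, (1 : ℂ) + b * q ^ j ≠ 0)

include hone in
lemma qq_ne (n : ℕ) : qPoch q q n ≠ 0 := by
  refine qPoch_ne_zero fun k _ => ?_
  have h := hone (k + 1) (by omega)
  intro hc; exact h (by rw [← hc]; ring)

include hone in
lemma q2_ne (n : ℕ) : qPoch (q ^ 2) (q ^ 2) n ≠ 0 := by
  refine qPoch_ne_zero fun k _ => ?_
  have h := hone (2 * k + 2) (by omega)
  intro hc; exact h (by rw [← hc]; ring)

set_option maxHeartbeats 1600000 in
include hq hone in
lemma wz (m k : ℕ) (hk : k ≤ m) :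
    A1c q b m * Tt q b (m + 1) k + A0c q b m * Tt q b m k =
      Uu q b m (k + 1) - Uu q b m k := by
  have hA2 : ∀ n, qPoch (q ^ 2) (q ^ 2) n ≠ 0 := q2_ne hone
  have hA3 : ∀ n, qPoch q q n ≠ 0 := qq_ne hone
  match k with
  | 0 =>
    have h1 : (1 : ℂ) - q * q ^ m ≠ 0 := by
      have h := hone (m + 1) (by omega); intro hc; exact h (by rw [← hc]; ring)
    have h2 : (1 : ℂ) - q ^ 2 ≠ 0 := hone 2 (by omega)
    simp only [Tt, Uu, A1c, A0c, Nn, Nat.sub_zero, Nat.zero_sub, pow_zero, qPoch_zero]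
    have hA3m := hA3 m
    norm_num
    rw [qPoch_succ q q m, qPoch_succ (q^2) (q^2) 0, qPoch_zero]
    field_simp
    ring
  | (s + 1) =>
    obtain ⟨d, rfl⟩ : ∃ d, m = s + 1 + d := ⟨m - (s + 1), by omega⟩
    have h1 : (1 : ℂ) - q * q ^ d ≠ 0 := by
      have h := hone (d + 1) (by omega); intro hc; exact h (by rw [← hc]; ring)
    have h2 : (1 : ℂ) - q ^ 2 * (q ^ 2) ^ (s + 1) ≠ 0 := by
      have h := hone (2 * s + 4) (by omega); intro hc; exact h (by rw [← hc]; ring)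
    simp only [Tt, Uu, A1c, A0c, Nn]
    rw [show s + 1 + d - (s + 1) = d from by omega,
        show s + 1 + d + 1 - (s + 1) = d + 1 from by omega,
        show d + 1 + 1 = d + 2 from by omega,
        show s + 1 + d + 1 - s = d + 2 from by omega,
        show s + 1 + d - s = d + 1 from by omega,
        show (s + 1) ^ 2 - (s + 1) = s ^ 2 + s from by
          have h : (s + 1) ^ 2 = s ^ 2 + 2 * s + 1 := by ring
          omega,
        show (s + 1 + 1) ^ 2 - (s + 1 + 1) = s ^ 2 + 3 * s + 2 from by
          have h : (s + 1 + 1) ^ 2 = s ^ 2 + 4 * s + 4 := by ring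
          omega]
    rw [qPoch_succ (b * q ^ (d + 2)) q s,
        qPoch_succ_left (b * q ^ (d + 1)) q s,
        show b * q ^ (d + 1) * q = b * q ^ (d + 2) from by ring,
        qPoch_succ q q d,
        qPoch_succ (q ^ 2) (q ^ 2) (s + 1)]
    have hA2s := hA2 (s + 1)
    have hA3d := hA3 d
    simp only [← mul_div_assoc]
    have hD1 : qPoch (q ^ 2) (q ^ 2) (s + 1) * (qPoch q q d * (1 - q * q ^ d)) ≠ 0 :=
      mul_ne_zero hA2s (mul_ne_zero hA3d h1)
    have hD2 : qPoch (q ^ 2) (q ^ 2) (s + 1) * qPoch q q d ≠ 0 := mul_ne_zero hA2s hA3d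
    have hD3 : q ^ (2 * (s + 1) + 2) * (qPoch (q ^ 2) (q ^ 2) (s + 1) * (1 - q ^ 2 * (q ^ 2) ^ (s + 1))) * qPoch q q d ≠ 0 :=
      mul_ne_zero (mul_ne_zero (pow_ne_zero _ hq) (mul_ne_zero hA2s h2)) hA3d
    have hD4 : q ^ (2 * s + 2) * qPoch (q ^ 2) (q ^ 2) (s + 1) * (qPoch q q d * (1 - q * q ^ d)) ≠ 0 :=
      mul_ne_zero (mul_ne_zero (pow_ne_zero _ hq) hA2s) (mul_ne_zero hA3d h1)
    rw [div_add_div _ _ hD1 hD2, div_sub_div _ _ hD3 hD4,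
      div_eq_div_iff (mul_ne_zero hD1 hD2) (mul_ne_zero hD3 hD4)]
    ring

include hq hone in
lemma bdry (m : ℕ) : A1c q b m * Tt q b (m + 1) (m + 1) = - Uu q b m (m + 1) := by
  have hA2 := q2_ne hone (m + 1)
  simp only [Tt, Uu, A1c, Nn]
  rw [show m + 1 - (m + 1) + 1 = 1 from by omega, show m + 1 - (m + 1) = 0 from by omega,
      show m + 1 - m = 1 from by omega, show m - m = 0 from by omega,
      show (m + 1) ^ 2 - (m + 1) = m ^ 2 + m from by
        have h : (m + 1) ^ 2 = m ^ 2 + 2 * m + 1 := by ring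
        omega,
      qPoch_zero, qPoch_succ (b * q ^ 1) q m]
  have hpow : (q : ℂ) ^ (2 * m + 2) ≠ 0 := pow_ne_zero _ hq
  field_simp
  ring

include hq hone hb2 in
lemma rrec (m : ℕ) : A1c q b m * Rr q b (m + 1) + A0c q b m * Rr q b m = 0 := by
  have hA2 := q2_ne hone
  match m with
  | 0 =>
    have hb0 : (1 : ℂ) + b ≠ 0 := by have := hb2 0; rwa [pow_zero, mul_one] at this
    have hb1' : (1 : ℂ) + b * q ≠ 0 := by have := hb2 1; rwa [pow_one] at this
    have h2 : (1 : ℂ) - q ^ 2 ≠ 0 := hone 2 (by omega)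
    have hR0 : Rr q b 0 = 1 := by
      simp only [Rr, pow_zero, qPoch_zero, mul_one, one_mul]
      exact div_self hb0
    have hR1 : Rr q b 1 = q * (1 + b) * (1 + b * q) / ((1 + b * q) * (1 - q ^ 2)) := by
      simp only [Rr, pow_one]
      rw [qPoch_succ (-(b * q)) q 0, qPoch_succ (q ^ 2) (q ^ 2) 0]
      simp only [qPoch_zero, pow_zero, one_mul, mul_one]
      ring_nf
    simp only [A1c, A0c]
    rw [hR0, hR1]
    norm_num
    field_simp
    ring
  | (t + 1) =>
    have h2 : (1 : ℂ) - q ^ 2 * (q ^ 2) ^ (t + 1) ≠ 0 := by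
      have h := hone (2 * t + 4) (by omega); intro hc; exact h (by rw [← hc]; ring)
    simp only [Rr, A1c, A0c]
    rw [qPoch_succ (-(b * q ^ (t + 1 + 1))) q (t + 1),
        qPoch_succ (-(b * q ^ (t + 1 + 1))) q t,
        qPoch_succ_left (-(b * q ^ (t + 1))) q t,
        show -(b * q ^ (t + 1)) * q = -(b * q ^ (t + 1 + 1)) from by ring,
        qPoch_succ (q ^ 2) (q ^ 2) (t + 1)]
    have hbt1 := hb2 (t + 1)
    have hbt2 := hb2 (t + 1 + 1)
    have hA2t := hA2 (t + 1)
    field_simp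
    ring

include hq hone hb2 in
lemma core : ∀ m : ℕ, ∑ k ∈ range (m + 1), Tt q b m k = Rr q b m := by
  intro m
  induction m with
  | zero =>
    have hb0 := hb2 0
    rw [pow_zero, mul_one] at hb0
    rw [Finset.sum_range_one]
    simp only [Tt, Rr, Nat.sub_zero, pow_zero, qPoch_zero]
    norm_num
    rw [div_self hb0]
  | succ m ih =>
    have key : A1c q b m * (∑ k ∈ range (m + 2), Tt q b (m + 1) k) +
        A0c q b m * ∑ k ∈ range (m + 1), Tt q b m k = 0 := by
      rw [Finset.sum_range_succ (f := Tt q b (m + 1)) (n := m + 1)]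
      have tele : ∑ k ∈ range (m + 1), (Uu q b m (k + 1) - Uu q b m k) =
          Uu q b m (m + 1) - Uu q b m 0 := Finset.sum_range_sub (Uu q b m) (m + 1)
      have step : ∑ k ∈ range (m + 1), (A1c q b m * Tt q b (m + 1) k + A0c q b m * Tt q b m k) =
          Uu q b m (m + 1) - Uu q b m 0 := by
        rw [← tele]
        exact Finset.sum_congr rfl fun k hk => wz hq hone m k (by
          have := Finset.mem_range.mp hk; omega)
      have hU0 : Uu q b m 0 = 0 := rfl
      have hbd := bdry (q := q) (b := b) hq hone m
      calc A1c q b m * (∑ k ∈ range (m + 1), Tt q b (m + 1) k + Tt q b (m + 1) (m + 1)) +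
            A0c q b m * ∑ k ∈ range (m + 1), Tt q b m k
          = (∑ k ∈ range (m + 1), (A1c q b m * Tt q b (m + 1) k + A0c q b m * Tt q b m k)) +
              A1c q b m * Tt q b (m + 1) (m + 1) := by
            rw [Finset.sum_add_distrib, ← Finset.mul_sum, ← Finset.mul_sum]; ring
        _ = (Uu q b m (m + 1) - Uu q b m 0) + (- Uu q b m (m + 1)) := by rw [step, hbd]
        _ = 0 := by rw [hU0]; ring
    have hA1 : A1c q b m ≠ 0 := by
      have h1 := hb2 (m + 1)
      have h2 := hone (2 * m + 2) (by omega)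
      exact mul_ne_zero h1 h2
    have hr := rrec hq hone hb2 m
    rw [ih] at key
    have : A1c q b m * (∑ k ∈ range (m + 2), Tt q b (m + 1) k) = A1c q b m * Rr q b (m + 1) := by
      linear_combination key - hr
    exact mul_left_cancel₀ hA1 this

end core

section main

variable {q a : ℂ} (hq : q ≠ 0) (hone : ∀ j : ℕ, 1 ≤ j → (1 : ℂ) - q ^ j ≠ 0)
  (hpa : ∀ j : ℕ, (1 : ℂ) + a * q ^ j ≠ 0)
  (hma : ∀ j : ℕ, 1 ≤ j → (1 : ℂ) - a * q ^ j ≠ 0)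

include hma in
lemma paq_ne (n : ℕ) : qPoch (a * q) q n ≠ 0 := by
  refine qPoch_ne_zero fun k _ => ?_
  have h := hma (k + 1) (by omega)
  intro hc; exact h (by rw [← hc]; ring)

lemma pneg_ne {c : ℂ} (hc : ∀ k : ℕ, (1 : ℂ) + c * q ^ k ≠ 0) (n : ℕ) :
    qPoch (-c) q n ≠ 0 := by
  refine qPoch_ne_zero fun k _ => ?_
  intro h2; exact hc k (by rw [← h2]; ring)

include hma in
lemma pshift_ne (r i n : ℕ) : qPoch (a * q ^ (2 * r) * q ^ (i + 1)) q n ≠ 0 := by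
  refine qPoch_ne_zero fun k _ => ?_
  have h := hma (2 * r + i + 1 + k) (by omega)
  intro hc; exact h (by rw [← hc]; ring)

include hq hone hma in
lemma perterm (c : ℂ) (r m i : ℕ) (hi : i ≤ m) :
    (-1 : ℂ) ^ (r + m - (r + i)) * q ^ ((r + m - (r + i)) ^ 2 - (r + m - (r + i))) /
        qPoch (q ^ 2) (q ^ 2) (r + m - (r + i)) *
        (c / (qPoch q q (r + i - r) * qPoch (a * q) q (r + i + r))) =
      c * (Tt q (a * q ^ (2 * r)) m (m - i) * (qPoch (a * q) q (2 * r + m))⁻¹) := by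
  rw [show r + m - (r + i) = m - i from by omega, show r + i - r = i from by omega,
      show r + i + r = 2 * r + i from by omega]
  have hsplit := qPoch_add (a * q) q (2 * r + i) (m - i)
  rw [show 2 * r + i + (m - i) = 2 * r + m from by omega,
      show a * q * q ^ (2 * r + i) = a * q ^ (2 * r) * q ^ (i + 1) from by
        rw [pow_add, pow_add]; ring] at hsplit
  rw [Tt, show m - (m - i) = i from by omega, hsplit]
  have h1 := q2_ne hone (m - i)
  have h2 := qq_ne hone i
  have h3 := paq_ne hma (2 * r + i)
  have h4 := pshift_ne hma r i (m - i)
  field_simp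

end main

/-- Lemma 2.3 of the paper (Patkowski): a Bailey pair relative to `(a, q)` transforms
into a Bailey pair relative to `(a², q²)`. -/
theorem stmt8 (q a : ℂ) (hq0 : 0 < ‖q‖) (hq1 : ‖q‖ < 1)
    (ha1 : ∀ k : ℕ, a ≠ -q ^ (-(k : ℤ)))
    (ha2 : ∀ k : ℕ, 1 ≤ k → a * q ^ k ≠ 1)
    (ha3 : ∀ k : ℕ, 1 ≤ k → a ^ 2 * q ^ (2 * k) ≠ 1)
    (α β : ℕ → ℂ)
    (hBailey : ∀ n : ℕ, β n = ∑ j ∈ Finset.range (n + 1),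
      α j / (qPoch q q (n - j) * qPoch (a * q) q (n + j))) :
    ∀ n : ℕ,
      q ^ (-(n : ℤ)) / qPoch (-a) q (2 * n) *
          ∑ j ∈ Finset.range (n + 1),
            (-1 : ℂ) ^ (n - j) * q ^ ((n - j) ^ 2 - (n - j)) / qPoch (q ^ 2) (q ^ 2) (n - j) *
              β j =
        ∑ j ∈ Finset.range (n + 1),
          ((1 + a * q ^ (2 * j)) / ((1 + a) * q ^ j) * α j) /
            (qPoch (q ^ 2) (q ^ 2) (n - j) * qPoch (a ^ 2 * q ^ 2) (q ^ 2) (n + j)) := by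

  have hq : q ≠ 0 := by
    intro h; rw [h] at hq0; simp at hq0
  have hone : ∀ j : ℕ, 1 ≤ j → (1 : ℂ) - q ^ j ≠ 0 := by
    intro j hj h
    have hqj : q ^ j = 1 := by linear_combination -h
    have habs : ‖q ^ j‖ < 1 := by
      rw [norm_pow]; exact pow_lt_one₀ (norm_nonneg q) hq1 (by omega)
    rw [hqj] at habs; simp at habs
  have hpa : ∀ j : ℕ, (1 : ℂ) + a * q ^ j ≠ 0 := by
    intro j h
    apply ha1 j
    have hinv : (q : ℂ) ^ j ≠ 0 := pow_ne_zero _ hq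
    rw [zpow_neg, zpow_natCast]
    field_simp
    linear_combination h
  have hma : ∀ j : ℕ, 1 ≤ j → (1 : ℂ) - a * q ^ j ≠ 0 := by
    intro j hj h
    exact ha2 j hj (by linear_combination -h)
  intro n
  simp only [zpow_neg, zpow_natCast]
  have hcond : ∀ (x y : ℕ), x ∈ range (n + 1) ∧ y ∈ range (x + 1) ↔
      x ∈ Ico y (n + 1) ∧ y ∈ range (n + 1) := by
    intro x y; simp only [mem_range, mem_Ico]; omega
  have e1 : (q ^ n)⁻¹ / qPoch (-a) q (2 * n) *
      ∑ j ∈ Finset.range (n + 1),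
        (-1 : ℂ) ^ (n - j) * q ^ ((n - j) ^ 2 - (n - j)) / qPoch (q ^ 2) (q ^ 2) (n - j) * β j =
      ∑ u ∈ range (n + 1), ∑ j ∈ Ico u (n + 1),
        (q ^ n)⁻¹ / qPoch (-a) q (2 * n) *
          ((-1 : ℂ) ^ (n - j) * q ^ ((n - j) ^ 2 - (n - j)) / qPoch (q ^ 2) (q ^ 2) (n - j) *
            (α u / (qPoch q q (j - u) * qPoch (a * q) q (j + u)))) := by
    rw [Finset.mul_sum]
    refine (Finset.sum_congr rfl fun j _ => ?_).trans (Finset.sum_comm' hcond)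
    rw [hBailey j, Finset.mul_sum, Finset.mul_sum]
  rw [e1]
  refine Finset.sum_congr rfl fun r hr => ?_
  have hrn : r ≤ n := by have := mem_range.mp hr; omega
  obtain ⟨m, rfl⟩ : ∃ m, n = r + m := ⟨n - r, by omega⟩
  rw [Finset.sum_Ico_eq_sum_range, show r + m + 1 - r = m + 1 from by omega]
  have e2 : ∀ i ∈ range (m + 1),
      (q ^ (r + m))⁻¹ / qPoch (-a) q (2 * (r + m)) *
        ((-1 : ℂ) ^ (r + m - (r + i)) * q ^ ((r + m - (r + i)) ^ 2 - (r + m - (r + i))) /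
            qPoch (q ^ 2) (q ^ 2) (r + m - (r + i)) *
          (α r / (qPoch q q (r + i - r) * qPoch (a * q) q (r + i + r)))) =
      (q ^ (r + m))⁻¹ / qPoch (-a) q (2 * (r + m)) *
        (α r * (Tt q (a * q ^ (2 * r)) m (m - i) * (qPoch (a * q) q (2 * r + m))⁻¹)) := by
    intro i hi
    rw [perterm hq hone hma (α r) r m i (by have := mem_range.mp hi; omega)]
  rw [Finset.sum_congr rfl e2]
  have e3 : ∑ i ∈ range (m + 1),
      (q ^ (r + m))⁻¹ / qPoch (-a) q (2 * (r + m)) *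
        (α r * (Tt q (a * q ^ (2 * r)) m (m - i) * (qPoch (a * q) q (2 * r + m))⁻¹)) =
      (q ^ (r + m))⁻¹ / qPoch (-a) q (2 * (r + m)) *
        (α r * ((∑ i ∈ range (m + 1), Tt q (a * q ^ (2 * r)) m (m - i)) *
          (qPoch (a * q) q (2 * r + m))⁻¹)) := by
    rw [Finset.sum_mul, Finset.mul_sum, Finset.mul_sum]
  rw [e3]
  have hrefl : ∑ i ∈ range (m + 1), Tt q (a * q ^ (2 * r)) m (m - i) =
      ∑ k ∈ range (m + 1), Tt q (a * q ^ (2 * r)) m k := by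
    have h := Finset.sum_range_reflect (Tt q (a * q ^ (2 * r)) m) (m + 1)
    simpa using h
  have hb2 : ∀ j : ℕ, (1 : ℂ) + a * q ^ (2 * r) * q ^ j ≠ 0 := by
    intro j
    have h := hpa (2 * r + j)
    intro hc; exact h (by rw [← hc]; rw [pow_add]; ring)
  have hcore := core hq hone hb2 m
  rw [hrefl, hcore]
  -- final algebra
  rw [show r + m - r = m from by omega, show r + m + r = 2 * r + m from by omega,
      show (a : ℂ) ^ 2 * q ^ 2 = (a * q) ^ 2 from by ring, qPoch_sq (a * q) q (2 * r + m)]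
  have hs := qPoch_shift (-a) q (2 * r + m)
  rw [show (-a : ℂ) * q = -(a * q) from by ring] at hs
  have hsplit : qPoch (-a) q (2 * (r + m)) * (1 + a * q ^ (2 * r) * q ^ m) =
      (1 + a) * qPoch (-(a * q)) q (2 * r + m) * qPoch (-(a * q ^ (2 * r) * q ^ m)) q m := by
    rw [show 2 * (r + m) = 2 * r + m + m from by omega, qPoch_add (-a) q (2 * r + m) m,
        show (-a : ℂ) * q ^ (2 * r + m) = -(a * q ^ (2 * r) * q ^ m) from by
          rw [pow_add]; ring]
    have e : (1 : ℂ) - -a = 1 + a := by ring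
    have e2' : (1 : ℂ) - -a * q ^ (2 * r + m) = 1 + a * q ^ (2 * r) * q ^ m := by
      rw [pow_add]; ring
    rw [e, e2'] at hs
    linear_combination (-qPoch (-(a * q ^ (2 * r) * q ^ m)) q m) * hs
  have hd1 : (1 : ℂ) + a * q ^ (2 * r) * q ^ m ≠ 0 := hb2 m
  have hP1 : qPoch (a * q) q (2 * r + m) ≠ 0 := paq_ne hma (2 * r + m)
  have hP3 : qPoch (-(a * q ^ (2 * r) * q ^ m)) q m ≠ 0 := by
    refine pneg_ne (c := a * q ^ (2 * r) * q ^ m) ?_ _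
    intro k h
    exact hpa (2 * r + m + k) (by rw [← h]; rw [pow_add, pow_add]; ring)
  have hP4 : qPoch (q ^ 2) (q ^ 2) m ≠ 0 := q2_ne hone m
  have h1a : (1 : ℂ) + a ≠ 0 := by have := hpa 0; rwa [pow_zero, mul_one] at this
  have hS : qPoch (-a) q (2 * (r + m)) ≠ 0 := by
    refine pneg_ne (c := a) ?_ _
    exact hpa
  have hP2eq : qPoch (-(a * q)) q (2 * r + m) =
      qPoch (-a) q (2 * (r + m)) * (1 + a * q ^ (2 * r) * q ^ m) /
        ((1 + a) * qPoch (-(a * q ^ (2 * r) * q ^ m)) q m) := by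
    rw [eq_div_iff (mul_ne_zero h1a hP3)]
    linear_combination -hsplit
  clear hP2eq
  rw [Rr]
  have hP2 : qPoch (-(a * q)) q (2 * r + m) ≠ 0 := by
    refine pneg_ne (c := a * q) ?_ _
    intro k h
    exact hpa (k + 1) (by rw [← h]; ring)
  have hL : (q ^ (r + m))⁻¹ / qPoch (-a) q (2 * (r + m)) *
      (α r * (q ^ m * (1 + a * q ^ (2 * r)) * qPoch (-(a * q ^ (2 * r) * q ^ m)) q m /
          ((1 + a * q ^ (2 * r) * q ^ m) * qPoch (q ^ 2) (q ^ 2) m) *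
        (qPoch (a * q) q (2 * r + m))⁻¹)) =
      (α r * q ^ m * (1 + a * q ^ (2 * r)) * qPoch (-(a * q ^ (2 * r) * q ^ m)) q m) /
        (q ^ (r + m) * qPoch (-a) q (2 * (r + m)) * (1 + a * q ^ (2 * r) * q ^ m) *
          qPoch (q ^ 2) (q ^ 2) m * qPoch (a * q) q (2 * r + m)) := by
    simp only [div_eq_mul_inv, mul_inv]
    ring
  rw [hL]
  have hR : (1 + a * q ^ (2 * r)) / ((1 + a) * q ^ r) * α r /
      (qPoch (q ^ 2) (q ^ 2) m * (qPoch (a * q) q (2 * r + m) * qPoch (-(a * q)) q (2 * r + m))) =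
      ((1 + a * q ^ (2 * r)) * α r) /
        ((1 + a) * q ^ r * qPoch (q ^ 2) (q ^ 2) m * qPoch (a * q) q (2 * r + m) *
          qPoch (-(a * q)) q (2 * r + m)) := by
    simp only [div_eq_mul_inv, mul_inv]
    ring
  rw [hR]
  have hD1 : q ^ (r + m) * qPoch (-a) q (2 * (r + m)) * (1 + a * q ^ (2 * r) * q ^ m) *
      qPoch (q ^ 2) (q ^ 2) m * qPoch (a * q) q (2 * r + m) ≠ 0 :=
    mul_ne_zero (mul_ne_zero (mul_ne_zero (mul_ne_zero (pow_ne_zero _ hq) hS) hd1) hP4) hP1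
  have hD2 : (1 + a) * q ^ r * qPoch (q ^ 2) (q ^ 2) m * qPoch (a * q) q (2 * r + m) *
      qPoch (-(a * q)) q (2 * r + m) ≠ 0 :=
    mul_ne_zero (mul_ne_zero (mul_ne_zero (mul_ne_zero h1a (pow_ne_zero _ hq)) hP4) hP1) hP2
  rw [div_eq_div_iff hD1 hD2]
  linear_combination (-(α r * (1 + a * q ^ (2 * r)) * q ^ m * q ^ r *
    qPoch (q ^ 2) (q ^ 2) m * qPoch (a * q) q (2 * r + m))) * hsplit
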